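/- Let 0 < s < 1, 2 ≤ p with sp < n, and let p*_s = np/(n−sp). Let R > 0 and Q = B_R × (T−R^{sp}, T]. Suppose w ∈ L^{p*_s,p}(Q) ∩ L^{p,∞}(Q), and let q, r ≥ 1 satisfy 1 − 1/r − n/(spq) ≥ 0. Then w ∈ L^{pq′, pr′}(Q) and ‖w‖_{L^{pq′,pr′}(Q)}^p ≤ R^{sp(1 − 1/r − n/(spq))} · ( ‖w‖_{L^{p,∞}(Q)}^p + ‖w‖_{L^{p*_s,p}(Q)}^p ). -/

import Mathlib

set_option maxHeartbeats 1000000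

open MeasureTheory Metric

/-- Mixed space-time norm `‖u‖_{L^{q,r}} = (∫_J (∫_Ω |u|^q dx)^{r/q} dt)^{1/r}`. -/
noncomputable def mixedNorm (n : ℕ) (q r : ℝ) (Ω : Set (EuclideanSpace ℝ (Fin n)))
    (J : Set ℝ) (u : EuclideanSpace ℝ (Fin n) → ℝ → ℝ) : ℝ :=
  (∫ t in J, (∫ x in Ω, |u x t| ^ q) ^ (r / q)) ^ (1 / r)

/-- Membership in the mixed space `L^{q,r}(Ω×J)`. -/
def MemMixed (n : ℕ) (q r : ℝ) (Ω : Set (EuclideanSpace ℝ (Fin n)))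
    (J : Set ℝ) (u : EuclideanSpace ℝ (Fin n) → ℝ → ℝ) : Prop :=
  (∀ t ∈ J, IntegrableOn (fun x => |u x t| ^ q) Ω) ∧
  IntegrableOn (fun t => (∫ x in Ω, |u x t| ^ q) ^ (r / q)) J

/-- The `L^{q,∞}` norm: supremum in time of the spatial `L^q` norm. -/
noncomputable def timeSupNorm (n : ℕ) (q : ℝ) (Ω : Set (EuclideanSpace ℝ (Fin n)))
    (J : Set ℝ) (u : EuclideanSpace ℝ (Fin n) → ℝ → ℝ) : ℝ :=
  ⨆ t ∈ J, (∫ x in Ω, |u x t| ^ q) ^ (1 / q)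

/-- Membership in `L^{q,∞}(Ω×J)`. -/
def MemTimeSup (n : ℕ) (q : ℝ) (Ω : Set (EuclideanSpace ℝ (Fin n)))
    (J : Set ℝ) (u : EuclideanSpace ℝ (Fin n) → ℝ → ℝ) : Prop :=
  (∀ t ∈ J, IntegrableOn (fun x => |u x t| ^ q) Ω) ∧
  BddAbove ((fun t => (∫ x in Ω, |u x t| ^ q) ^ (1 / q)) '' J)

theorem interpolation_subcritical (n : ℕ) (s p q r R T : ℝ)
    (hs0 : 0 < s) (hs1 : s < 1) (hp : 2 ≤ p) (hspn : s * p < n) (hR : 0 < R)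
    (hq : 1 ≤ q) (hr : 1 ≤ r) (hqr : 0 ≤ 1 - 1 / r - n / (s * p * q))
    (w : EuclideanSpace ℝ (Fin n) → ℝ → ℝ)
    (hmeas : Measurable (Function.uncurry w))
    (hmemS : MemMixed n ((n : ℝ) * p / ((n : ℝ) - s * p)) p
      (ball (0 : EuclideanSpace ℝ (Fin n)) R) (Set.Ioc (T - R ^ (s * p)) T) w)
    (hmemI : MemTimeSup n p (ball (0 : EuclideanSpace ℝ (Fin n)) R)
      (Set.Ioc (T - R ^ (s * p)) T) w) :
    MemMixed n (p * (q / (q - 1))) (p * (r / (r - 1)))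
        (ball (0 : EuclideanSpace ℝ (Fin n)) R) (Set.Ioc (T - R ^ (s * p)) T) w ∧
    mixedNorm n (p * (q / (q - 1))) (p * (r / (r - 1)))
        (ball (0 : EuclideanSpace ℝ (Fin n)) R) (Set.Ioc (T - R ^ (s * p)) T) w ^ p
      ≤ R ^ (s * p * (1 - 1 / r - n / (s * p * q))) *
        (timeSupNorm n p (ball (0 : EuclideanSpace ℝ (Fin n)) R)
            (Set.Ioc (T - R ^ (s * p)) T) w ^ p
          + mixedNorm n ((n : ℝ) * p / ((n : ℝ) - s * p)) p
              (ball (0 : EuclideanSpace ℝ (Fin n)) R)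
              (Set.Ioc (T - R ^ (s * p)) T) w ^ p) := by
  have hp0 : (0:ℝ) < p := by linarith
  have hsp : 0 < s * p := mul_pos hs0 hp0
  have hn : (0:ℝ) < n := hsp.trans hspn
  have hns : (0:ℝ) < (n:ℝ) - s * p := by linarith
  have hr0 : (0:ℝ) < r := by linarith
  have hq0 : (0:ℝ) < q := by linarith
  have hnq_pos : (0:ℝ) < (n:ℝ) / (s * p * q) := div_pos hn (by positivity)
  have hrinv : (0:ℝ) < 1 / r := by positivity
  have hr1 : 1 < r := (div_lt_one hr0).mp (by linarith)
  have hq_big : (n:ℝ) < s * p * q := (div_lt_one (by positivity)).mp (by linarith)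
  have hq1 : 1 < q := by nlinarith
  have hq1' : (0:ℝ) < q - 1 := by linarith
  have hr1' : (0:ℝ) < r - 1 := by linarith
  set Ω : Set (EuclideanSpace ℝ (Fin n)) := ball 0 R with hΩdef
  set J : Set ℝ := Set.Ioc (T - R ^ (s * p)) T with hJdef
  set ps : ℝ := (n:ℝ) * p / ((n:ℝ) - s * p) with hps_def
  set A : ℝ := p * (q / (q - 1)) with hA_def
  set B : ℝ := p * (r / (r - 1)) with hB_def
  clear_value Ω J ps A B
  have hps_pos : 0 < ps := by rw [hps_def]; exact div_pos (by positivity) hns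
  have hA_pos : 0 < A := by rw [hA_def]; exact mul_pos hp0 (div_pos hq0 hq1')
  have hB_pos : 0 < B := by rw [hB_def]; exact mul_pos hp0 (div_pos hr0 hr1')
  have hpA : p < A := by
    have h : 1 < q / (q - 1) := (one_lt_div hq1').mpr (by linarith)
    have h2 := mul_lt_mul_of_pos_left h hp0
    rw [mul_one] at h2
    rw [hA_def]; exact h2
  have hAps : A < ps := by
    rw [hA_def, hps_def, mul_div_assoc', div_lt_div_iff₀ hq1' hns]
    nlinarith [mul_lt_mul_of_pos_left hq_big hp0]
  set u : ℝ := (ps - p) / (ps - A) with hu_def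
  set v : ℝ := (ps - p) / (A - p) with hv_def
  clear_value u v
  have hpsA : 0 < ps - A := by linarith
  have hAp : 0 < A - p := by linarith
  have hpsp : 0 < ps - p := by linarith
  have hu_pos : 0 < u := by rw [hu_def]; exact div_pos hpsp hpsA
  have hv_pos : 0 < v := by rw [hv_def]; exact div_pos hpsp hAp
  have hu1 : 1 < u := by rw [hu_def]; exact (one_lt_div hpsA).mpr (by linarith)
  have hconj : Real.HolderConjugate u v := by
    refine ⟨?_, hu_pos, hv_pos⟩
    rw [inv_one, hu_def, hv_def, inv_div, inv_div, ← add_div, sub_add_sub_cancel]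
    exact div_self hpsp.ne'
  have hI0 : p / u + ps / v = A := by
    rw [hu_def, hv_def]; field_simp [hpsp.ne', hpsA.ne', hAp.ne']; ring
  have hI2 : ps / (v * A) = (n:ℝ) / (s * p * q) := by
    rw [hv_def, hA_def, hps_def]
    have e1 : (n:ℝ) * p / ((n:ℝ) - s * p) - p = p * (s * p) / ((n:ℝ) - s * p) := by
      rw [eq_div_iff hns.ne', sub_mul, div_mul_cancel₀ _ hns.ne']; ring
    have e2 : p * (q / (q - 1)) - p = p / (q - 1) := by field_simp; ring
    have e3 : p * (s * p) / ((n:ℝ) - s * p) / (p / (q - 1))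
        = p * s * (q - 1) / ((n:ℝ) - s * p) := by field_simp
    rw [e1, e2, e3, div_eq_div_iff]
    · field_simp
    · exact (mul_pos (div_pos (mul_pos (mul_pos hp0 hs0) hq1') hns)
        (mul_pos hp0 (div_pos hq0 hq1'))).ne'
    · positivity
  have hI1 : p / (u * A) = 1 - (n:ℝ) / (s * p * q) := by
    rw [← hI2, eq_sub_iff_add_eq, ← div_div p u A, ← div_div ps v A, ← add_div, hI0,
      div_self hA_pos.ne']
  -- the time interval
  have hJne : T - R ^ (s * p) < T := by
    have : (0:ℝ) < R ^ (s * p) := Real.rpow_pos_of_pos hR _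
    linarith
  have hTJ : T ∈ J := by rw [hJdef]; exact Set.right_mem_Ioc.mpr hJne
  have hJmeas : MeasurableSet J := by rw [hJdef]; exact measurableSet_Ioc
  have hJfin : volume J < ⊤ := by rw [hJdef]; exact measure_Ioc_lt_top
  -- nonnegativity of spatial integrals
  have hInt_nn : ∀ (c t : ℝ), 0 ≤ ∫ x in Ω, |w x t| ^ c := fun c t =>
    integral_nonneg fun x => Real.rpow_nonneg (abs_nonneg _) _
  -- the sup norm
  set S : ℝ := timeSupNorm n p Ω J w with hS_def
  clear_value S
  have hBddF : BddAbove (Set.range fun t =>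
      ⨆ _ : t ∈ J, (∫ x in Ω, |w x t| ^ p) ^ (1 / p)) := by
    obtain ⟨M, hM⟩ := hmemI.2
    refine ⟨max M 0, ?_⟩
    rintro y ⟨t, rfl⟩
    dsimp only
    by_cases ht : t ∈ J
    · rw [ciSup_pos ht]
      exact le_max_of_le_left (hM (Set.mem_image_of_mem _ ht))
    · haveI : IsEmpty (t ∈ J) := ⟨ht⟩
      rw [Real.iSup_of_isEmpty]
      exact le_max_right _ _
  have hS_le : ∀ t ∈ J, (∫ x in Ω, |w x t| ^ p) ^ (1 / p) ≤ S := by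
    intro t ht
    rw [hS_def]; unfold timeSupNorm
    calc (∫ x in Ω, |w x t| ^ p) ^ (1 / p)
        = ⨆ _ : t ∈ J, (∫ x in Ω, |w x t| ^ p) ^ (1 / p) :=
          (ciSup_pos (f := fun _ => (∫ x in Ω, |w x t| ^ p) ^ (1 / p)) ht).symm
      _ ≤ _ := le_ciSup hBddF t
  have hS_nn : 0 ≤ S := le_trans (Real.rpow_nonneg (hInt_nn p T) _) (hS_le T hTJ)
  have hIp_le : ∀ t ∈ J, (∫ x in Ω, |w x t| ^ p) ≤ S ^ p := by
    intro t ht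
    have h := Real.rpow_le_rpow (Real.rpow_nonneg (hInt_nn p t) _) (hS_le t ht) hp0.le
    rwa [← Real.rpow_mul (hInt_nn p t), one_div_mul_cancel hp0.ne', Real.rpow_one] at h
  -- measurability
  have hw_t : ∀ t, Measurable fun x => w x t := fun t =>
    hmeas.comp (measurable_id.prodMk measurable_const)
  have hmeasI : ∀ c : ℝ, StronglyMeasurable fun t => ∫ x in Ω, |w x t| ^ c := by
    intro c
    have h : StronglyMeasurable fun z : EuclideanSpace ℝ (Fin n) × ℝ => |w z.1 z.2| ^ c :=
      (hmeas.abs.pow_const c).stronglyMeasurable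
    exact h.integral_prod_left'
  -- rpow helpers
  have hrpow_id : ∀ (x c d : ℝ), 0 ≤ x → d ≠ 0 → (x ^ (c / d)) ^ d = x ^ c := by
    intro x c d hx hd
    rw [← Real.rpow_mul hx, div_mul_cancel₀ _ hd]
  have h_rpow_le : ∀ y : ℝ, 0 ≤ y → ∀ c : ℝ, 0 < c → c ≤ 1 → y ^ c ≤ 1 + y := by
    intro y hy c hc hc1
    rcases le_or_gt y 1 with h | h
    · have h2 : y ^ c ≤ 1 := Real.rpow_le_one hy h hc.le
      linarith
    · have h2 : y ^ c ≤ y ^ (1:ℝ) := Real.rpow_le_rpow_of_exponent_le h.le hc1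
      rw [Real.rpow_one] at h2
      linarith
  have habs_le : ∀ y : ℝ, 0 ≤ y → y ^ A ≤ y ^ p + y ^ ps := by
    intro y hy
    rcases le_or_gt y 1 with h | h
    · have h1 : y ^ A ≤ y ^ p := by
        rcases eq_or_lt_of_le hy with h0 | h0
        · rw [← h0, Real.zero_rpow hA_pos.ne', Real.zero_rpow hp0.ne']
        · exact Real.rpow_le_rpow_of_exponent_ge h0 h hpA.le
      have h2 : 0 ≤ y ^ ps := Real.rpow_nonneg hy _
      linarith
    · have h1 : y ^ A ≤ y ^ ps := Real.rpow_le_rpow_of_exponent_le h.le hAps.le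
      have h2 : 0 ≤ y ^ p := Real.rpow_nonneg hy _
      linarith
  -- MemLp helper
  have hMem : ∀ (t c d : ℝ), 0 < d → IntegrableOn (fun x => |w x t| ^ c) Ω →
      MemLp (fun x => |w x t| ^ (c / d)) (ENNReal.ofReal d) (volume.restrict Ω) := by
    intro t c d hd hint
    have h1 : MemLp (fun x => |w x t| ^ c) 1 (volume.restrict Ω) :=
      memLp_one_iff_integrable.mpr hint
    have h2 := h1.norm_rpow_div (ENNReal.ofReal d)⁻¹
    rw [one_div, inv_inv] at h2
    refine h2.ae_eq (Filter.Eventually.of_forall fun x => ?_)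
    rw [ENNReal.toReal_inv, ENNReal.toReal_ofReal hd.le, Real.norm_eq_abs,
      abs_of_nonneg (Real.rpow_nonneg (abs_nonneg _) _), ← Real.rpow_mul (abs_nonneg _),
      ← div_eq_mul_inv]
  -- spatial Hölder
  have hHolder : ∀ t ∈ J, (∫ x in Ω, |w x t| ^ A)
      ≤ (∫ x in Ω, |w x t| ^ p) ^ (1 / u) * (∫ x in Ω, |w x t| ^ ps) ^ (1 / v) := by
    intro t ht
    have hm1 := hMem t p u hu_pos (hmemI.1 t ht)
    have hm2 := hMem t ps v hv_pos (hmemS.1 t ht)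
    have key := MeasureTheory.integral_mul_le_Lp_mul_Lq_of_nonneg hconj
      (Filter.Eventually.of_forall fun x => Real.rpow_nonneg (abs_nonneg _) _)
      (Filter.Eventually.of_forall fun x => Real.rpow_nonneg (abs_nonneg _) _) hm1 hm2
    have E0 : (∫ x in Ω, |w x t| ^ A) = ∫ x in Ω, |w x t| ^ (p / u) * |w x t| ^ (ps / v) := by
      refine integral_congr_ae (Filter.Eventually.of_forall fun x => ?_)
      show |w x t| ^ A = |w x t| ^ (p / u) * |w x t| ^ (ps / v)
      rw [← hI0, Real.rpow_add' (abs_nonneg _) (by rw [hI0]; exact hA_pos.ne')]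
    have E1 : (∫ x in Ω, (|w x t| ^ (p / u)) ^ u) = ∫ x in Ω, |w x t| ^ p :=
      integral_congr_ae (Filter.Eventually.of_forall fun x =>
        hrpow_id _ _ _ (abs_nonneg _) hu_pos.ne')
    have E2 : (∫ x in Ω, (|w x t| ^ (ps / v)) ^ v) = ∫ x in Ω, |w x t| ^ ps :=
      integral_congr_ae (Filter.Eventually.of_forall fun x =>
        hrpow_id _ _ _ (abs_nonneg _) hv_pos.ne')
    rw [E0, ← E1, ← E2]
    exact key
  -- the exponent E for the time Hölder
  set E : ℝ := (n:ℝ) / (s * p * q) * (r / (r - 1)) with hE_def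
  clear_value E
  have hE_pos : 0 < E := by rw [hE_def]; exact mul_pos hnq_pos (div_pos hr0 hr1')
  have hE_le1 : E ≤ 1 := by
    have h1 : (n:ℝ) / (s * p * q) ≤ 1 - 1 / r := by linarith
    have h2 : E ≤ (1 - 1 / r) * (r / (r - 1)) := by
      rw [hE_def]; exact mul_le_mul_of_nonneg_right h1 (div_pos hr0 hr1').le
    have h3 : (1 - 1 / r) * (r / (r - 1)) = 1 := by
      field_simp
    linarith
  have hEexp : 1 / v * (B / A) = p / ps * E := by
    rw [hE_def, ← hI2, hB_def]
    field_simp [hv_pos.ne', hA_pos.ne', hps_pos.ne', hr0.ne', hr1'.ne', hp0.ne']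
  -- pointwise-in-time bound
  have hPoint : ∀ t ∈ J, (∫ x in Ω, |w x t| ^ A) ^ (B / A)
      ≤ (S ^ p) ^ (1 / u * (B / A)) * ((∫ x in Ω, |w x t| ^ ps) ^ (p / ps)) ^ E := by
    intro t ht
    have h1 : (∫ x in Ω, |w x t| ^ A)
        ≤ (S ^ p) ^ (1 / u) * (∫ x in Ω, |w x t| ^ ps) ^ (1 / v) := by
      refine (hHolder t ht).trans ?_
      exact mul_le_mul_of_nonneg_right
        (Real.rpow_le_rpow (hInt_nn p t) (hIp_le t ht) (div_pos one_pos hu_pos).le)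
        (Real.rpow_nonneg (hInt_nn ps t) _)
    have h2 := Real.rpow_le_rpow (hInt_nn A t) h1 (div_pos hB_pos hA_pos).le
    have h3 : ((S ^ p) ^ (1 / u) * (∫ x in Ω, |w x t| ^ ps) ^ (1 / v)) ^ (B / A)
        = (S ^ p) ^ (1 / u * (B / A)) * ((∫ x in Ω, |w x t| ^ ps) ^ (p / ps)) ^ E := by
      rw [Real.mul_rpow (Real.rpow_nonneg (Real.rpow_nonneg hS_nn p) _)
            (Real.rpow_nonneg (hInt_nn ps t) _),
          ← Real.rpow_mul (Real.rpow_nonneg hS_nn p),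
          ← Real.rpow_mul (hInt_nn ps t), hEexp,
          Real.rpow_mul (hInt_nn ps t)]
    rw [h3] at h2
    exact h2
  -- integrability of the two time functions
  have hg_int : IntegrableOn (fun t => (∫ x in Ω, |w x t| ^ ps) ^ (p / ps)) J := hmemS.2
  have hone_int : IntegrableOn (fun _ : ℝ => (1:ℝ)) J := integrableOn_const hJfin.ne
  have hgE_int : IntegrableOn (fun t => ((∫ x in Ω, |w x t| ^ ps) ^ (p / ps)) ^ E) J := by
    refine Integrable.mono' (hone_int.add hg_int)
      ((((hmeasI ps).measurable.pow_const (p / ps)).pow_const E).aestronglyMeasurable) ?_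
    refine Filter.Eventually.of_forall fun t => ?_
    rw [Real.norm_eq_abs, abs_of_nonneg (Real.rpow_nonneg (Real.rpow_nonneg (hInt_nn ps t) _) _)]
    exact h_rpow_le _ (Real.rpow_nonneg (hInt_nn ps t) _) E hE_pos hE_le1
  have hmemA1 : ∀ t ∈ J, IntegrableOn (fun x => |w x t| ^ A) Ω := by
    intro t ht
    refine Integrable.mono' ((hmemI.1 t ht).add (hmemS.1 t ht))
      ((hw_t t).abs.pow_const A).aestronglyMeasurable ?_
    refine Filter.Eventually.of_forall fun x => ?_
    rw [Real.norm_eq_abs, abs_of_nonneg (Real.rpow_nonneg (abs_nonneg _) _)]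
    exact habs_le _ (abs_nonneg _)
  have hIaBA_int : IntegrableOn (fun t => (∫ x in Ω, |w x t| ^ A) ^ (B / A)) J := by
    refine Integrable.mono' (Integrable.const_mul
      ((hone_int.add hg_int)) ((S ^ p) ^ (1 / u * (B / A))))
      (((hmeasI A).measurable.pow_const (B / A)).aestronglyMeasurable) ?_
    refine (ae_restrict_iff' hJmeas).mpr (Filter.Eventually.of_forall fun t ht => ?_)
    rw [Real.norm_eq_abs, abs_of_nonneg (Real.rpow_nonneg (hInt_nn A t) _)]
    refine (hPoint t ht).trans ?_
    have hC : 0 ≤ (S ^ p) ^ (1 / u * (B / A)) := Real.rpow_nonneg (Real.rpow_nonneg hS_nn _) _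
    have h2 := h_rpow_le ((∫ x in Ω, |w x t| ^ ps) ^ (p / ps))
      (Real.rpow_nonneg (hInt_nn ps t) _) E hE_pos hE_le1
    exact mul_le_mul_of_nonneg_left h2 hC
  -- step A : integrate the pointwise bound
  have hStepA : (∫ t in J, (∫ x in Ω, |w x t| ^ A) ^ (B / A))
      ≤ (S ^ p) ^ (1 / u * (B / A)) * ∫ t in J, ((∫ x in Ω, |w x t| ^ ps) ^ (p / ps)) ^ E := by
    rw [← integral_const_mul]
    exact setIntegral_mono_on hIaBA_int (hgE_int.const_mul _) hJmeas fun t ht => hPoint t ht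
  -- length of the time interval
  have hM : (∫ t in J, (1:ℝ)) = R ^ (s * p) := by
    rw [setIntegral_const, smul_eq_mul, mul_one, hJdef, measureReal_def, Real.volume_Ioc, sub_sub_cancel,
      ENNReal.toReal_ofReal (Real.rpow_nonneg hR.le _)]
  have hG_nn : 0 ≤ ∫ t in J, (∫ x in Ω, |w x t| ^ ps) ^ (p / ps) :=
    integral_nonneg fun t => Real.rpow_nonneg (hInt_nn ps t) _
  -- step B : time Hölder
  have hTime : (∫ t in J, ((∫ x in Ω, |w x t| ^ ps) ^ (p / ps)) ^ E)
      ≤ (∫ t in J, (∫ x in Ω, |w x t| ^ ps) ^ (p / ps)) ^ E * (R ^ (s * p)) ^ (1 - E) := by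
    rcases eq_or_lt_of_le hE_le1 with hE1 | hE1
    · simp only [hE1, Real.rpow_one, sub_self, Real.rpow_zero, mul_one]
      exact le_rfl
    · have hconjT : Real.HolderConjugate (1 / E) (1 / (1 - E)) := by
        refine ⟨?_, div_pos one_pos hE_pos, div_pos one_pos (by linarith)⟩
        · rw [one_div, inv_inv, one_div, inv_inv, inv_one]; ring
      have hfin : IsFiniteMeasure (volume.restrict J) :=
        ⟨by rw [Measure.restrict_apply_univ]; exact hJfin⟩
      have hmemf : MemLp (fun t => ((∫ x in Ω, |w x t| ^ ps) ^ (p / ps)) ^ E)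
          (ENNReal.ofReal (1 / E)) (volume.restrict J) := by
        have h1 : MemLp (fun t => (∫ x in Ω, |w x t| ^ ps) ^ (p / ps)) 1 (volume.restrict J) :=
          memLp_one_iff_integrable.mpr hg_int
        have h2 := h1.norm_rpow_div (ENNReal.ofReal E)
        rw [one_div, ← ENNReal.ofReal_inv_of_pos hE_pos, ← one_div] at h2
        refine h2.ae_eq (Filter.Eventually.of_forall fun t => ?_)
        rw [ENNReal.toReal_ofReal hE_pos.le, Real.norm_eq_abs,
          abs_of_nonneg (Real.rpow_nonneg (hInt_nn ps t) _)]
      have hmemg : MemLp (fun _ : ℝ => (1:ℝ)) (ENNReal.ofReal (1 / (1 - E)))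
          (volume.restrict J) := memLp_const 1
      have key := MeasureTheory.integral_mul_le_Lp_mul_Lq_of_nonneg hconjT
        (Filter.Eventually.of_forall fun t =>
          Real.rpow_nonneg (Real.rpow_nonneg (hInt_nn ps t) _) _)
        (Filter.Eventually.of_forall fun _ => zero_le_one) hmemf hmemg
      simp only [mul_one, Real.one_rpow, one_div_one_div] at key
      have E3 : (∫ t in J, (((∫ x in Ω, |w x t| ^ ps) ^ (p / ps)) ^ E) ^ (1 / E))
          = ∫ t in J, (∫ x in Ω, |w x t| ^ ps) ^ (p / ps) := by
        refine integral_congr_ae (Filter.Eventually.of_forall fun t => ?_)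
        show (((∫ x in Ω, |w x t| ^ ps) ^ (p / ps)) ^ E) ^ (1 / E)
            = (∫ x in Ω, |w x t| ^ ps) ^ (p / ps)
        rw [← Real.rpow_mul (Real.rpow_nonneg (hInt_nn ps t) _), mul_one_div,
          div_self hE_pos.ne', Real.rpow_one]
      rw [E3, hM] at key
      exact key
  -- combine A and B
  have hX_nn : 0 ≤ ∫ t in J, (∫ x in Ω, |w x t| ^ A) ^ (B / A) :=
    integral_nonneg fun t => Real.rpow_nonneg (hInt_nn A t) _
  have hX_le : (∫ t in J, (∫ x in Ω, |w x t| ^ A) ^ (B / A))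
      ≤ (S ^ p) ^ (1 / u * (B / A)) *
        ((∫ t in J, (∫ x in Ω, |w x t| ^ ps) ^ (p / ps)) ^ E * (R ^ (s * p)) ^ (1 - E)) :=
    hStepA.trans (mul_le_mul_of_nonneg_left hTime
      (Real.rpow_nonneg (Real.rpow_nonneg hS_nn _) _))
  have hMain := Real.rpow_le_rpow hX_nn hX_le (div_pos hp0 hB_pos).le
  -- exponent identities
  have hexp1 : 1 / u * (B / A) * (p / B) = 1 - (n:ℝ) / (s * p * q) := by
    rw [← hI1]
    field_simp [hu_pos.ne', hA_pos.ne', hB_pos.ne']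
  have hexp2 : E * (p / B) = (n:ℝ) / (s * p * q) := by
    rw [hE_def, hB_def]
    field_simp [hp0.ne', hr0.ne', hr1'.ne', hsp.ne']
  have hpB : p / B = 1 - 1 / r := by
    rw [hB_def]
    field_simp [hp0.ne', hr0.ne', hr1'.ne']
  have hexp3 : (1 - E) * (p / B) = 1 - 1 / r - (n:ℝ) / (s * p * q) := by
    rw [sub_mul, one_mul, hexp2, hpB]
  have hRHS : ((S ^ p) ^ (1 / u * (B / A)) *
        ((∫ t in J, (∫ x in Ω, |w x t| ^ ps) ^ (p / ps)) ^ E * (R ^ (s * p)) ^ (1 - E))) ^ (p / B)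
      = (S ^ p) ^ (1 - (n:ℝ) / (s * p * q)) *
        ((∫ t in J, (∫ x in Ω, |w x t| ^ ps) ^ (p / ps)) ^ ((n:ℝ) / (s * p * q)) *
          (R ^ (s * p)) ^ (1 - 1 / r - (n:ℝ) / (s * p * q))) := by
    rw [Real.mul_rpow (Real.rpow_nonneg (Real.rpow_nonneg hS_nn _) _)
          (mul_nonneg (Real.rpow_nonneg hG_nn _)
            (Real.rpow_nonneg (Real.rpow_nonneg hR.le _) _)),
        Real.mul_rpow (Real.rpow_nonneg hG_nn _) (Real.rpow_nonneg (Real.rpow_nonneg hR.le _) _),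
        ← Real.rpow_mul (Real.rpow_nonneg hS_nn _),
        ← Real.rpow_mul hG_nn,
        ← Real.rpow_mul (Real.rpow_nonneg hR.le _),
        hexp1, hexp2, hexp3]
  rw [hRHS] at hMain
  -- geometric mean
  have hθ1 : 0 ≤ 1 - (n:ℝ) / (s * p * q) := by linarith
  have hc1 : (n:ℝ) / (s * p * q) ≤ 1 := by linarith
  have hGM := Real.geom_mean_le_arith_mean2_weighted hθ1 hnq_pos.le
    (Real.rpow_nonneg hS_nn p) hG_nn (by ring)
  have hGM2 : (S ^ p) ^ (1 - (n:ℝ) / (s * p * q)) *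
        (∫ t in J, (∫ x in Ω, |w x t| ^ ps) ^ (p / ps)) ^ ((n:ℝ) / (s * p * q))
      ≤ S ^ p + ∫ t in J, (∫ x in Ω, |w x t| ^ ps) ^ (p / ps) := by
    refine hGM.trans ?_
    have h1 : (1 - (n:ℝ) / (s * p * q)) * S ^ p ≤ S ^ p :=
      mul_le_of_le_one_left (Real.rpow_nonneg hS_nn p) (by linarith)
    have h2 : (n:ℝ) / (s * p * q) * (∫ t in J, (∫ x in Ω, |w x t| ^ ps) ^ (p / ps))
        ≤ ∫ t in J, (∫ x in Ω, |w x t| ^ ps) ^ (p / ps) :=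
      mul_le_of_le_one_left hG_nn hc1
    linarith
  -- final assembly
  have hLHS : mixedNorm n A B Ω J w ^ p
      = (∫ t in J, (∫ x in Ω, |w x t| ^ A) ^ (B / A)) ^ (p / B) := by
    unfold mixedNorm
    rw [← Real.rpow_mul hX_nn, one_div, inv_mul_eq_div]
  have hSob : mixedNorm n ps p Ω J w ^ p
      = ∫ t in J, (∫ x in Ω, |w x t| ^ ps) ^ (p / ps) := by
    unfold mixedNorm
    rw [← Real.rpow_mul hG_nn, one_div_mul_cancel hp0.ne', Real.rpow_one]
  refine ⟨⟨hmemA1, hIaBA_int⟩, ?_⟩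
  rw [hLHS, hSob, Real.rpow_mul hR.le]
  calc (∫ t in J, (∫ x in Ω, |w x t| ^ A) ^ (B / A)) ^ (p / B)
      ≤ (S ^ p) ^ (1 - (n:ℝ) / (s * p * q)) *
        ((∫ t in J, (∫ x in Ω, |w x t| ^ ps) ^ (p / ps)) ^ ((n:ℝ) / (s * p * q)) *
          (R ^ (s * p)) ^ (1 - 1 / r - (n:ℝ) / (s * p * q))) := hMain
    _ = ((S ^ p) ^ (1 - (n:ℝ) / (s * p * q)) *
          (∫ t in J, (∫ x in Ω, |w x t| ^ ps) ^ (p / ps)) ^ ((n:ℝ) / (s * p * q))) *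
        (R ^ (s * p)) ^ (1 - 1 / r - (n:ℝ) / (s * p * q)) := by ring
    _ ≤ (S ^ p + ∫ t in J, (∫ x in Ω, |w x t| ^ ps) ^ (p / ps)) *
        (R ^ (s * p)) ^ (1 - 1 / r - (n:ℝ) / (s * p * q)) :=
        mul_le_mul_of_nonneg_right hGM2 (Real.rpow_nonneg (Real.rpow_nonneg hR.le _) _)
    _ = (R ^ (s * p)) ^ (1 - 1 / r - (n:ℝ) / (s * p * q)) *
        (S ^ p + ∫ t in J, (∫ x in Ω, |w x t| ^ ps) ^ (p / ps)) := by ring
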